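/- In the GE model with Hamming bonus, restricted to instances satisfying subset feasibility and submodularity, the following 3-competitive guarantee holds: for every n divisible by 3 and every T, there exists a deterministic online algorithm whose output sequence on every such instance has value at least OPT/3. In particular, the algorithm that partitions N into three sets A, B, C of size n/3 and at each time t outputs the most profitable feasible solution among the profit-maximizing feasible solutions contained in A, in B, and in C achieves this guarantee. -/

import Mathlib

/-- The value of a solution sequence under the Hamming bonus: total profit plus,
for each pair of consecutive steps, `n` minus the Hamming distance
(cardinality of the symmetric difference) of the two solutions. -/
noncomputable def hamVal (n T : ℕ) (p : ℕ → Finset (Fin n) → ℝ)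
    (S : ℕ → Finset (Fin n)) : ℝ :=
  (∑ t ∈ Finset.range T, p t (S t)) +
    ∑ t ∈ Finset.range (T - 1),
      ((n : ℝ) - (((S t \ S (t + 1)) ∪ (S (t + 1) \ S t)).card : ℝ))

/-- A valid multistage instance: the empty set is feasible at every time step and
profits are nonnegative. -/
def ValidInstance (n T : ℕ) (F : ℕ → Set (Finset (Fin n)))
    (p : ℕ → Finset (Fin n) → ℝ) : Prop :=
  (∀ t, t < T → (∅ : Finset (Fin n)) ∈ F t) ∧ ∀ t, t < T → ∀ S, 0 ≤ p t S

/-- A solution sequence: feasible at every time step. -/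
def IsSol (n T : ℕ) (F : ℕ → Set (Finset (Fin n))) (S : ℕ → Finset (Fin n)) : Prop :=
  ∀ t, t < T → S t ∈ F t

/-- A deterministic online algorithm: the solution output at time `t < T` depends
only on the data `(F_s, p_s)` revealed up to time `s ≤ t`. -/
def IsOnline (n T : ℕ)
    (alg : (ℕ → Set (Finset (Fin n))) → (ℕ → Finset (Fin n) → ℝ) → ℕ → Finset (Fin n)) :
    Prop :=
  ∀ F p F' p', ∀ t, t < T →
    (∀ s, s ≤ t → F s = F' s ∧ p s = p' s) → alg F p t = alg F' p' t

/-- Subset feasibility: at every time step, every subset of a feasible solution is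
feasible. -/
def SubsetFeasible (n T : ℕ) (F : ℕ → Set (Finset (Fin n))) : Prop :=
  ∀ t, t < T → ∀ S ∈ F t, ∀ S' ⊆ S, S' ∈ F t

/-- Submodularity of the profit functions. -/
def Submodular (n T : ℕ) (p : ℕ → Finset (Fin n) → ℝ) : Prop :=
  ∀ t, t < T → ∀ S S' : Finset (Fin n),
    p t (S ∩ S') + p t (S ∪ S') ≤ p t S + p t S'

open Finset


open Classical in
noncomputable def pick {n : ℕ} (A B C : Finset (Fin n))
    (Ft : Set (Finset (Fin n))) (pt : Finset (Fin n) → ℝ) : Finset (Fin n) :=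
  if h : ∃ S, S ∈ Ft ∧ (S ⊆ A ∨ S ⊆ B ∨ S ⊆ C) ∧
      ∀ S' ∈ Ft, (S' ⊆ A ∨ S' ⊆ B ∨ S' ⊆ C) → pt S' ≤ pt S then
    h.choose else ∅

lemma pick_spec {n : ℕ} (A B C : Finset (Fin n))
    (Ft : Set (Finset (Fin n))) (pt : Finset (Fin n) → ℝ) (h0 : (∅ : Finset (Fin n)) ∈ Ft) :
    pick A B C Ft pt ∈ Ft ∧ (pick A B C Ft pt ⊆ A ∨ pick A B C Ft pt ⊆ B ∨ pick A B C Ft pt ⊆ C) ∧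
      ∀ S' ∈ Ft, (S' ⊆ A ∨ S' ⊆ B ∨ S' ⊆ C) → pt S' ≤ pt (pick A B C Ft pt) := by
  classical
  have hex : ∃ S, S ∈ Ft ∧ (S ⊆ A ∨ S ⊆ B ∨ S ⊆ C) ∧
      ∀ S' ∈ Ft, (S' ⊆ A ∨ S' ⊆ B ∨ S' ⊆ C) → pt S' ≤ pt S := by
    obtain ⟨b, hb, hmax⟩ := Finset.exists_max_image
      (Finset.univ.filter fun S => S ∈ Ft ∧ (S ⊆ A ∨ S ⊆ B ∨ S ⊆ C)) pt
      ⟨∅, by simp [h0]⟩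
    simp only [mem_filter, mem_univ, true_and] at hb hmax
    exact ⟨b, hb.1, hb.2, fun S' hS' hsub => hmax S' ⟨hS', hsub⟩⟩
  rw [pick, dif_pos hex]
  exact hex.choose_spec

lemma exists_partition (n : ℕ) (hn : 3 ∣ n) :
    ∃ A B C : Finset (Fin n), A ∪ B ∪ C = Finset.univ ∧ Disjoint A B ∧ Disjoint A C ∧
      Disjoint B C ∧ A.card = n / 3 ∧ B.card = n / 3 ∧ C.card = n / 3 := by
  have h3 : 3 * (n / 3) = n := Nat.mul_div_cancel' hn
  have hu : (Finset.univ : Finset (Fin n)).card = n := by simp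
  obtain ⟨A, hA, hAcard⟩ := Finset.exists_subset_card_eq (s := (Finset.univ : Finset (Fin n))) (n := n / 3)
    (by omega)
  obtain ⟨B, hB, hBcard⟩ := Finset.exists_subset_card_eq (s := Finset.univ \ A) (n := n / 3) (by
    rw [Finset.card_sdiff_of_subset hA, hu, hAcard]; omega)
  refine ⟨A, B, (Finset.univ \ A) \ B, ?_, ?_, ?_, ?_, hAcard, hBcard, ?_⟩
  · rw [Finset.union_assoc, Finset.union_comm B, Finset.sdiff_union_of_subset hB,
      Finset.union_sdiff_of_subset hA]
  · exact (Finset.disjoint_sdiff).mono_right hB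
  · exact (Finset.disjoint_sdiff).mono_right (Finset.sdiff_subset)
  · exact Finset.sdiff_disjoint.symm
  · rw [Finset.card_sdiff_of_subset hB, Finset.card_sdiff_of_subset hA, hu, hAcard, hBcard]; omega

lemma main_ineq (n T : ℕ) (hn : 3 ∣ n) (F : ℕ → Set (Finset (Fin n)))
    (p : ℕ → Finset (Fin n) → ℝ) (hv : ValidInstance n T F p)
    (hsf : SubsetFeasible n T F) (hsm : Submodular n T p)
    (A B C : Finset (Fin n)) (hU : A ∪ B ∪ C = Finset.univ)
    (hA : A.card = n / 3) (hB : B.card = n / 3) (hC : C.card = n / 3)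
    (S : ℕ → Finset (Fin n))
    (hS : ∀ t, t < T → S t ∈ F t ∧ (S t ⊆ A ∨ S t ⊆ B ∨ S t ⊆ C) ∧
      ∀ S' ∈ F t, (S' ⊆ A ∨ S' ⊆ B ∨ S' ⊆ C) → p t S' ≤ p t (S t))
    (Shat : ℕ → Finset (Fin n)) (hShat : IsSol n T F Shat) :
    hamVal n T p Shat / 3 ≤ hamVal n T p S := by
  have h3 : 3 * (n / 3) = n := Nat.mul_div_cancel' hn
  -- profit bound, termwise
  have hprof : ∀ t, t < T → p t (Shat t) ≤ 3 * p t (S t) := by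
    intro t ht
    have hsub : ∀ X Y : Finset (Fin n), p t (X ∪ Y) ≤ p t X + p t Y := by
      intro X Y
      have h1 := hsm t ht X Y
      have h2 := hv.2 t ht (X ∩ Y)
      linarith
    have hdecomp : Shat t = (Shat t ∩ A) ∪ (Shat t ∩ B) ∪ (Shat t ∩ C) := by
      rw [← Finset.inter_union_distrib_left, ← Finset.inter_union_distrib_left, hU,
        Finset.inter_univ]
    have hle : ∀ X : Finset (Fin n), (X ⊆ A ∨ X ⊆ B ∨ X ⊆ C) → X ⊆ Shat t →
        p t X ≤ p t (S t) := by
      intro X hX hXsub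
      exact (hS t ht).2.2 X (hsf t ht (Shat t) (hShat t ht) X hXsub) hX
    calc p t (Shat t) = p t ((Shat t ∩ A) ∪ (Shat t ∩ B) ∪ (Shat t ∩ C)) := by rw [← hdecomp]
      _ ≤ p t ((Shat t ∩ A) ∪ (Shat t ∩ B)) + p t (Shat t ∩ C) := hsub _ _
      _ ≤ p t (Shat t ∩ A) + p t (Shat t ∩ B) + p t (Shat t ∩ C) := by
          have := hsub (Shat t ∩ A) (Shat t ∩ B); linarith
      _ ≤ 3 * p t (S t) := by
          have h1 := hle (Shat t ∩ A) (Or.inl Finset.inter_subset_right) Finset.inter_subset_left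
          have h2 := hle (Shat t ∩ B) (Or.inr (Or.inl Finset.inter_subset_right))
            Finset.inter_subset_left
          have h3 := hle (Shat t ∩ C) (Or.inr (Or.inr Finset.inter_subset_right))
            Finset.inter_subset_left
          linarith
  -- bonus bound, termwise
  have hbonus : ∀ t, t < T - 1 →
      ((n : ℝ) - (((Shat t \ Shat (t + 1)) ∪ (Shat (t + 1) \ Shat t)).card : ℝ)) ≤
      3 * ((n : ℝ) - (((S t \ S (t + 1)) ∪ (S (t + 1) \ S t)).card : ℝ)) := by
    intro t ht
    have ht1 : t < T := by omega
    have ht2 : t + 1 < T := by omega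
    have hcard : ∀ u, u < T → (S u).card ≤ n / 3 := by
      intro u hu
      rcases (hS u hu).2.1 with h | h | h
      · exact (Finset.card_le_card h).trans_eq hA
      · exact (Finset.card_le_card h).trans_eq hB
      · exact (Finset.card_le_card h).trans_eq hC
    have hd : ((S t \ S (t + 1)) ∪ (S (t + 1) \ S t)).card ≤ 2 * (n / 3) := by
      calc ((S t \ S (t + 1)) ∪ (S (t + 1) \ S t)).card
          ≤ (S t \ S (t + 1)).card + (S (t + 1) \ S t).card := Finset.card_union_le _ _
        _ ≤ (S t).card + (S (t + 1)).card :=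
            Nat.add_le_add (Finset.card_le_card Finset.sdiff_subset)
              (Finset.card_le_card Finset.sdiff_subset)
        _ ≤ 2 * (n / 3) := by have := hcard t ht1; have := hcard (t + 1) ht2; omega
    have hdn : 3 * ((S t \ S (t + 1)) ∪ (S (t + 1) \ S t)).card ≤ 2 * n := by omega
    have hdr : (3 : ℝ) * (((S t \ S (t + 1)) ∪ (S (t + 1) \ S t)).card : ℝ) ≤ 2 * n := by
      exact_mod_cast hdn
    have h0 : (0 : ℝ) ≤ (((Shat t \ Shat (t + 1)) ∪ (Shat (t + 1) \ Shat t)).card : ℝ) := by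
      positivity
    linarith
  -- combine
  have hkey : hamVal n T p Shat ≤ 3 * hamVal n T p S := by
    unfold hamVal
    rw [mul_add, Finset.mul_sum, Finset.mul_sum]
    gcongr with t htm t htm
    · exact hprof t (Finset.mem_range.mp htm)
    · exact hbonus t (Finset.mem_range.mp htm)
  linarith

/-- In the GE model with Hamming bonus, restricted to instances with subset
feasibility and submodular profits, and for `n` divisible by 3: there is a
3-competitive deterministic online algorithm, and, in particular, any sequence
produced by the algorithm that partitions `N` into three parts `A`, `B`, `C` of size
`n/3` and at each step outputs the most profitable feasible solution among the
profit-maximizing feasible solutions contained in `A`, in `B`, and in `C`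
has value at least `OPT / 3`. -/
theorem stmt6 (n T : ℕ) (hn : 3 ∣ n) :
    (∃ alg : (ℕ → Set (Finset (Fin n))) → (ℕ → Finset (Fin n) → ℝ) → ℕ → Finset (Fin n),
      IsOnline n T alg ∧
      ∀ F p, ValidInstance n T F p → SubsetFeasible n T F → Submodular n T p →
        (∀ t, t < T → alg F p t ∈ F t) ∧
        ∀ S : ℕ → Finset (Fin n), IsSol n T F S →
          hamVal n T p S / 3 ≤ hamVal n T p (alg F p)) ∧
    ∀ F p, ValidInstance n T F p → SubsetFeasible n T F → Submodular n T p →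
      ∀ A B C : Finset (Fin n),
        A ∪ B ∪ C = Finset.univ → Disjoint A B → Disjoint A C → Disjoint B C →
        A.card = n / 3 → B.card = n / 3 → C.card = n / 3 →
        ∀ S : ℕ → Finset (Fin n),
          (∀ t, t < T → S t ∈ F t ∧ (S t ⊆ A ∨ S t ⊆ B ∨ S t ⊆ C) ∧
            ∀ S' ∈ F t, (S' ⊆ A ∨ S' ⊆ B ∨ S' ⊆ C) → p t S' ≤ p t (S t)) →
          ∀ Shat : ℕ → Finset (Fin n), IsSol n T F Shat →
            hamVal n T p Shat / 3 ≤ hamVal n T p S := by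
  obtain ⟨A, B, C, hU, hAB, hAC, hBC, hA, hB, hC⟩ := exists_partition n hn
  constructor
  · refine ⟨fun F p t => pick A B C (F t) (p t), ?_, ?_⟩
    · intro F p F' p' t ht hagree
      show pick A B C (F t) (p t) = pick A B C (F' t) (p' t)
      rw [(hagree t le_rfl).1, (hagree t le_rfl).2]
    · intro F p hv hsf hsm
      have hspec : ∀ t, t < T → pick A B C (F t) (p t) ∈ F t ∧
          (pick A B C (F t) (p t) ⊆ A ∨ pick A B C (F t) (p t) ⊆ B ∨
            pick A B C (F t) (p t) ⊆ C) ∧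
          ∀ S' ∈ F t, (S' ⊆ A ∨ S' ⊆ B ∨ S' ⊆ C) → p t S' ≤ p t (pick A B C (F t) (p t)) :=
        fun t ht => pick_spec A B C (F t) (p t) (hv.1 t ht)
      refine ⟨fun t ht => (hspec t ht).1, fun S hSol => ?_⟩
      exact main_ineq n T hn F p hv hsf hsm A B C hU hA hB hC _ hspec S hSol
  · intro F p hv hsf hsm A' B' C' hU' _ _ _ hA' hB' hC' S hS Shat hShat
    exact main_ineq n T hn F p hv hsf hsm A' B' C' hU' hA' hB' hC' S hS Shat hShat
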